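/- Let n ≥ 1, k ≥ 0, and let P = [ρ₀,…,ρ_{n−1}] be a k-Rvalid vector of size n with exactly ℓ nonempty entries. Then for all maps g, g' : {0,…,n−1} → {0,…,n−1}, one has P ∪ (P·g)↑ = P ∪ (P·g')↑ if and only if g(j) = g'(j) for every index j with ρ_j ≠ ∅. Consequently, the cardinality of succ(P) = {P ∪ (P·g)↑ : g : {0,…,n−1} → {0,…,n−1}} equals n^ℓ. -/

import Mathlib

open Finset

/-- `Π·h`: the vector whose `q`-th entry is the union of the `Π p` over all `p` with `h p = q`. -/
def dotAct {n : ℕ} (Pi : Fin n → Finset ℕ) (h : Fin n → Fin n) : Fin n → Finset ℕ :=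
  fun q => (Finset.univ.filter (fun p => h p = q)).biUnion Pi

/-- Entrywise union of two vectors of sets. -/
def vUnion {n : ℕ} (Pi Pi' : Fin n → Finset ℕ) : Fin n → Finset ℕ :=
  fun q => Pi q ∪ Pi' q

/-- `r = max (π₀ ∪ … ∪ π_{n−1})`. -/
def vMax {n : ℕ} (Pi : Fin n → Finset ℕ) : ℕ :=
  (Finset.univ.sup Pi).sup id

/-- `Π↑`: add `r = max (π₀ ∪ … ∪ π_{n−1})` to every element of every entry. -/
def vUp {n : ℕ} (Pi : Fin n → Finset ℕ) : Fin n → Finset ℕ :=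
  fun q => (Pi q).image (· + vMax Pi)

/-- A `k`-EXPcomposition of size `n`: pairwise disjoint entries whose union is `{1,…,2^k}`. -/
def IsEXP {n : ℕ} (k : ℕ) (Pi : Fin n → Finset ℕ) : Prop :=
  (∀ p q : Fin n, p ≠ q → Disjoint (Pi p) (Pi q)) ∧
    Finset.univ.sup Pi = Finset.Icc 1 (2 ^ k)

/-- A `k`-Rvalid vector of size `n`. -/
def IsRvalid {n : ℕ} (k : ℕ) (ρ : Fin n → Finset ℕ) : Prop :=
  IsEXP k ρ ∧ (∀ p : Fin n, p.val = 0 → 1 ∈ ρ p) ∧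
    ∀ k' < k, ∀ i ∈ Finset.Icc 1 (2 ^ k'), ∀ j ∈ Finset.Icc 1 (2 ^ k'),
      (∃ α, i ∈ ρ α ∧ j ∈ ρ α) → ∃ β, i + 2 ^ k' ∈ ρ β ∧ j + 2 ^ k' ∈ ρ β

/-- A `k`-Lvalid vector of size `m`. -/
def IsLvalid {m : ℕ} (k : ℕ) (lam : Fin m → Finset ℕ) : Prop :=
  IsEXP k lam ∧ (∀ p : Fin m, p.val = 0 → 2 ^ k ∈ lam p) ∧
    ∀ k' < k, ∀ i ∈ Finset.Icc 1 (2 ^ k'), ∀ j ∈ Finset.Icc 1 (2 ^ k'),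
      (∃ α, 2 ^ k + 1 - i ∈ lam α ∧ 2 ^ k + 1 - j ∈ lam α) →
        ∃ β, 2 ^ k + 1 - (i + 2 ^ k') ∈ lam β ∧ 2 ^ k + 1 - (j + 2 ^ k') ∈ lam β

/-- Number of nonempty entries of a vector of sets. -/
def nne {n : ℕ} (Pi : Fin n → Finset ℕ) : ℕ :=
  (Finset.univ.filter (fun q => Pi q ≠ ∅)).card

/-- `succ(P) = {P ∪ (P·g)↑ : g}`. -/
def succSet {n : ℕ} (P : Fin n → Finset ℕ) : Finset (Fin n → Finset ℕ) :=
  (Finset.univ : Finset (Fin n → Fin n)).image (fun g => vUnion P (vUp (dotAct P g)))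

/-- The graded set `U_{m,n}^{(k)}` of U-pairs. -/
def Uset (m n : ℕ) : ℕ → Set ((Fin m → Finset ℕ) × (Fin n → Finset ℕ))
  | 0 => {x | x = (fun p => if p.val = 0 then {1} else ∅,
                   fun q => if q.val = 0 then {1} else ∅)}
  | k + 1 => {x | ∃ L P, (L, P) ∈ Uset m n k ∧ ∃ (f : Fin m → Fin m) (g : Fin n → Fin n),
      x = (vUnion (dotAct L f) (vUp L), vUnion P (vUp (dotAct P g)))}

/-- The `r`-Stirling number: partitions of `{1,…,a}` into `b` nonempty blocks
with `1,…,r` in pairwise distinct blocks. -/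
noncomputable def rStirling (a b r : ℕ) : ℕ :=
  Set.ncard {C : Finset (Finset ℕ) |
    C.card = b ∧ (∅ ∉ C) ∧
    (∀ B ∈ C, ∀ B' ∈ C, B ≠ B' → Disjoint B B') ∧
    C.sup id = Finset.Icc 1 a ∧
    ∀ x ∈ Finset.Icc 1 r, ∀ y ∈ Finset.Icc 1 r, x ≠ y →
      ∀ B ∈ C, x ∈ B → y ∉ B}

/-- The Stirling number of the second kind: the number of partitions of an
`a`-element set into `b` nonempty blocks. -/
noncomputable def stirling2 (a b : ℕ) : ℕ := rStirling a b 0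

/-- The entry `s_n^{(i,j)}` (with `1 ≤ i,j ≤ n`). -/
noncomputable def sEntry (n i j : ℕ) : ℕ :=
  if i ≤ j then
    (j - i).factorial * Nat.choose (n - i) (j - i) *
      ∑ α ∈ Finset.Icc (j - i) i, Nat.choose i α * i ^ (i - α) * stirling2 α (j - i)
  else 0

/-- The matrix `S_n`, with rows and columns indexed by `{1,…,n}`. -/
noncomputable def Smat (n : ℕ) : Matrix (Fin n) (Fin n) ℕ :=
  fun i j => sEntry n (i.val + 1) (j.val + 1)

/-- One step of the shuffle-automaton action on subsets of the grid. -/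
def stepE {m n : ℕ} (E : Finset (Fin m × Fin n)) (f : Fin m → Fin m) (g : Fin n → Fin n) :
    Finset (Fin m × Fin n) :=
  E.image (fun p => (f p.1, p.2)) ∪ E.image (fun p => (p.1, g p.2))

/-- Reachability from `{(0,0)}` by finitely many steps. -/
def Reach {m n : ℕ} (hm : 0 < m) (hn : 0 < n) (E : Finset (Fin m × Fin n)) : Prop :=
  Relation.ReflTransGen (fun E1 E2 => ∃ f g, E2 = stepE E1 f g)
    {(⟨0, hm⟩, ⟨0, hn⟩)} E

/-- Reachability from `{(0,0)}` in at most `t` steps. -/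
def ReachIn {m n : ℕ} (hm : 0 < m) (hn : 0 < n) :
    ℕ → Finset (Fin m × Fin n) → Prop
  | 0, E => E = {(⟨0, hm⟩, ⟨0, hn⟩)}
  | t + 1, E => ReachIn hm hn t E ∨
      ∃ E' f g, ReachIn hm hn t E' ∧ E = stepE E' f g

/-- `s(Λ,P) = {(i,j) : λ_i ∩ ρ_j ≠ ∅}`. -/
def sTab {m n : ℕ} (L : Fin m → Finset ℕ) (P : Fin n → Finset ℕ) :
    Finset (Fin m × Fin n) :=
  Finset.univ.filter (fun p => (L p.1 ∩ P p.2).Nonempty)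

theorem stmt6 (n k ℓ : ℕ) (hn : 1 ≤ n) (P : Fin n → Finset ℕ)
    (hP : IsRvalid k P) (hc : nne P = ℓ) :
    (∀ g g' : Fin n → Fin n,
        vUnion P (vUp (dotAct P g)) = vUnion P (vUp (dotAct P g')) ↔
          ∀ j : Fin n, P j ≠ ∅ → g j = g' j) ∧
      (succSet P).card = n ^ ℓ := by
  obtain ⟨⟨hdisj, hsup⟩, h1, _⟩ := hP
  have hmem : ∀ q x, x ∈ P q → x ∈ Finset.Icc 1 (2 ^ k) := fun q x hx =>
    hsup ▸ Finset.mem_of_subset (Finset.le_sup (Finset.mem_univ q)) hx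
  have hsupg : ∀ g : Fin n → Fin n, Finset.univ.sup (dotAct P g) = Finset.Icc 1 (2 ^ k) := by
    intro g
    rw [← hsup]
    apply le_antisymm
    · apply Finset.sup_le; intro q _
      intro x hx
      simp only [dotAct, Finset.mem_biUnion, Finset.mem_filter, Finset.mem_univ, true_and] at hx
      obtain ⟨p, _, hp⟩ := hx
      exact Finset.mem_of_subset (Finset.le_sup (Finset.mem_univ p)) hp
    · apply Finset.sup_le; intro p _
      intro x hx
      have hxd : x ∈ dotAct P g (g p) := by
        simp only [dotAct, Finset.mem_biUnion, Finset.mem_filter, Finset.mem_univ, true_and]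
        exact ⟨p, rfl, hx⟩
      exact Finset.mem_of_subset (Finset.le_sup (Finset.mem_univ (g p))) hxd
  have hIccsup : (Finset.Icc 1 (2 ^ k)).sup id = 2 ^ k := by
    apply le_antisymm
    · exact Finset.sup_le fun x hx => (Finset.mem_Icc.mp hx).2
    · exact Finset.le_sup (f := id) (Finset.mem_Icc.mpr ⟨Nat.one_le_two_pow, le_refl _⟩)
  have hvmax : ∀ g : Fin n → Fin n, vMax (dotAct P g) = 2 ^ k := by
    intro g; rw [vMax, hsupg, hIccsup]
  have key : ∀ g g' : Fin n → Fin n,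
      vUnion P (vUp (dotAct P g)) = vUnion P (vUp (dotAct P g')) ↔
        ∀ j : Fin n, P j ≠ ∅ → g j = g' j := by
    intro g g'
    constructor
    · intro h j hj
      obtain ⟨x, hx⟩ := Finset.nonempty_iff_ne_empty.mpr hj
      have hx1 : x ∈ dotAct P g (g j) := by
        simp only [dotAct, Finset.mem_biUnion, Finset.mem_filter, Finset.mem_univ, true_and]
        exact ⟨j, rfl, hx⟩
      have hx2 : x + 2 ^ k ∈ vUp (dotAct P g) (g j) := by
        simp only [vUp, hvmax g, Finset.mem_image]
        exact ⟨x, hx1, rfl⟩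
      have hcf := congrFun h (g j)
      have hx3 : x + 2 ^ k ∈ vUnion P (vUp (dotAct P g')) (g j) := by
        rw [← hcf]; exact Finset.mem_union_right _ hx2
      have hx4 : x + 2 ^ k ∈ vUp (dotAct P g') (g j) := by
        rcases Finset.mem_union.mp hx3 with h' | h'
        · exfalso
          have h5 := (Finset.mem_Icc.mp (hmem _ _ h')).2
          have h6 := (Finset.mem_Icc.mp (hmem j x hx)).1
          omega
        · exact h'
      simp only [vUp, hvmax g', Finset.mem_image] at hx4
      obtain ⟨y, hy, hyx⟩ := hx4
      have hyx' : y = x := by omega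
      subst hyx'
      simp only [dotAct, Finset.mem_biUnion, Finset.mem_filter, Finset.mem_univ, true_and] at hy
      obtain ⟨p, hp, hyp⟩ := hy
      have hpj : p = j := by
        by_contra hne
        exact Finset.disjoint_left.mp (hdisj p j hne) hyp hx
      subst hpj
      exact hp.symm
    · intro h
      have hd : dotAct P g = dotAct P g' := by
        funext q
        ext x
        simp only [dotAct, Finset.mem_biUnion, Finset.mem_filter, Finset.mem_univ, true_and]
        constructor
        · rintro ⟨p, hp, hx⟩
          exact ⟨p, by rw [← h p (Finset.ne_empty_of_mem hx)]; exact hp, hx⟩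
        · rintro ⟨p, hp, hx⟩
          exact ⟨p, by rw [h p (Finset.ne_empty_of_mem hx)]; exact hp, hx⟩
      rw [hd]
  refine ⟨key, ?_⟩
  have hnpos : 0 < n := hn
  classical
  set G : ({j : Fin n // P j ≠ ∅} → Fin n) → (Fin n → Fin n) :=
    fun h j => if hj : P j ≠ ∅ then h ⟨j, hj⟩ else ⟨0, hnpos⟩ with hG
  have himg : succSet P =
      Finset.univ.image (fun h => vUnion P (vUp (dotAct P (G h)))) := by
    apply Finset.ext
    intro A
    simp only [succSet, Finset.mem_image, Finset.mem_univ, true_and]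
    constructor
    · rintro ⟨g, rfl⟩
      refine ⟨fun j => g j.val, ?_⟩
      apply ((key _ _).mpr _).symm
      intro j hj
      simp [hG, hj]
    · rintro ⟨h, rfl⟩
      exact ⟨G h, rfl⟩
  have hinj : Function.Injective (fun h => vUnion P (vUp (dotAct P (G h)))) := by
    intro h h' he
    have := (key (G h) (G h')).mp he
    funext j
    have hj := this j.val j.prop
    simpa [hG, j.prop] using hj
  rw [himg, Finset.card_image_of_injective _ hinj, Finset.card_univ, Fintype.card_fun,
    Fintype.card_fin, Fintype.card_subtype, ← hc, nne]
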